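/- Let V1 ⊆ R^{N1} and V2 ⊆ R^{N2} be subspaces such that every nonzero vector of V1 and of V2 is s-sparse, and let U1, U2 satisfy NSP_s. If X, Z ∈ R^{N1×N2} have column spaces contained in V1 and row spaces contained in V2, and U1 X U2^T = U1 Z U2^T, then X = Z. -/

import Mathlib

/-- A vector is `s`-sparse if it has at most `s` nonzero entries. -/
def SparseVec {n : ℕ} (s : ℕ) (x : Fin n → ℝ) : Prop :=
  (Finset.univ.filter fun i => x i ≠ 0).card ≤ s

/-- The null space property of order `s`. -/
def NSP {m n : ℕ} (s : ℕ) (A : Matrix (Fin m) (Fin n) ℝ) : Prop :=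
  ∀ w : Fin n → ℝ, A.mulVec w = 0 → w ≠ 0 →
    ∀ S : Finset (Fin n), S.card = s →
      ∑ i ∈ S, |w i| < ∑ i ∈ Sᶜ, |w i|

/-- Let `V1 ⊆ ℝ^{N1}` and `V2 ⊆ ℝ^{N2}` be subspaces all of whose nonzero vectors are
`s`-sparse, and let `U1, U2` satisfy NSP of order `s`. If the column spaces of `X, Z`
are contained in `V1`, their row spaces in `V2`, and `U1 X U2ᵀ = U1 Z U2ᵀ`, then
`X = Z`. -/

lemma nsp_inj {m n s : ℕ} (hs : s ≤ n) (A : Matrix (Fin m) (Fin n) ℝ) (hA : NSP s A)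
    (w : Fin n → ℝ) (hw : SparseVec s w) (h0 : A.mulVec w = 0) : w = 0 := by
  by_contra hne
  obtain ⟨S, hSsub, hScard⟩ :=
    Finset.exists_superset_card_eq hw (by simpa using hs)
  have h := hA w h0 hne S hScard
  have hz : ∑ i ∈ Sᶜ, |w i| = 0 := by
    apply Finset.sum_eq_zero
    intro i hi
    rw [Finset.mem_compl] at hi
    by_contra hwi
    exact hi (hSsub (Finset.mem_filter.2 ⟨Finset.mem_univ i, fun h' => hwi (by simp [h'])⟩))
  have hnn : (0:ℝ) ≤ ∑ i ∈ S, |w i| := Finset.sum_nonneg fun i _ => abs_nonneg _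
  rw [hz] at h
  linarith

theorem injectivity_on_sparse_factor_spaces {N1 N2 m1 m2 s : ℕ}
    (hs1 : s ≤ N1) (hs2 : s ≤ N2)
    (V1 : Submodule ℝ (Fin N1 → ℝ)) (V2 : Submodule ℝ (Fin N2 → ℝ))
    (hV1 : ∀ v ∈ V1, v ≠ 0 → SparseVec s v)
    (hV2 : ∀ v ∈ V2, v ≠ 0 → SparseVec s v)
    (U1 : Matrix (Fin m1) (Fin N1) ℝ) (U2 : Matrix (Fin m2) (Fin N2) ℝ)
    (hU1 : NSP s U1) (hU2 : NSP s U2)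
    (X Z : Matrix (Fin N1) (Fin N2) ℝ)
    (hXcol : ∀ j, (fun i => X i j) ∈ V1) (hXrow : ∀ i, (fun j => X i j) ∈ V2)
    (hZcol : ∀ j, (fun i => Z i j) ∈ V1) (hZrow : ∀ i, (fun j => Z i j) ∈ V2)
    (hmeas : U1 * X * U2.transpose = U1 * Z * U2.transpose) :
    X = Z := by
  have hD : ∀ M : Matrix (Fin N1) (Fin N2) ℝ,
      (∀ j, (fun i => M i j) ∈ V1) → (∀ i, (fun j => M i j) ∈ V2) →
      U1 * M * U2.transpose = 0 → M = 0 := by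
    intro M hcol hrow hM
    -- first: M * U2ᵀ = 0
    have hMU2 : M * U2.transpose = 0 := by
      ext i k
      -- column k of M * U2ᵀ is in V1 and killed by U1
      have hcolmem : (fun i => (M * U2.transpose) i k) ∈ V1 := by
        have : (fun i => (M * U2.transpose) i k) =
            ∑ j : Fin N2, U2 k j • (fun i => M i j) := by
          funext i
          simp [Matrix.mul_apply, Matrix.transpose_apply, mul_comm, Finset.sum_apply]
        rw [this]
        exact Submodule.sum_mem _ fun j _ => Submodule.smul_mem _ _ (hcol j)
      have hker : U1.mulVec (fun i => (M * U2.transpose) i k) = 0 := by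
        funext a
        have h := congrFun (congrFun hM a) k
        simp only [Matrix.mul_apply, Matrix.transpose_apply, Matrix.zero_apply,
          Finset.sum_mul] at h
        rw [Finset.sum_comm] at h
        simp only [Matrix.mulVec, dotProduct, Matrix.mul_apply,
          Matrix.transpose_apply, Pi.zero_apply, Finset.mul_sum]
        simpa [mul_assoc] using h
      have hsp : (fun i => (M * U2.transpose) i k) = 0 := by
        by_cases h0 : (fun i => (M * U2.transpose) i k) = 0
        · exact h0
        · exact nsp_inj hs1 U1 hU1 _ (hV1 _ hcolmem h0) hker
      simpa using congrFun hsp i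
    -- now each row of M is killed by U2
    ext i j
    have hker2 : U2.mulVec (fun j => M i j) = 0 := by
      funext k
      have := congrFun (congrFun hMU2 i) k
      simpa [Matrix.mul_apply, Matrix.transpose_apply, Matrix.mulVec, dotProduct,
        mul_comm] using this
    have hsp2 : (fun j => M i j) = 0 := by
      by_cases h0 : (fun j => M i j) = 0
      · exact h0
      · exact nsp_inj hs2 U2 hU2 _ (hV2 _ (hrow i) h0) hker2
    simpa using congrFun hsp2 j
  have := hD (X - Z) (fun j => by
      have := Submodule.sub_mem V1 (hXcol j) (hZcol j); exact this)
    (fun i => by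
      have := Submodule.sub_mem V2 (hXrow i) (hZrow i); exact this)
    (by
      rw [Matrix.mul_sub, Matrix.sub_mul, hmeas, sub_self])
  exact sub_eq_zero.mp this
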